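/- For any two Gaussian primes λ₁, λ₂ coprime to 1+i and to each other's conjugates, the product of quartic residue symbols (λ₁/conj(λ₂))₄ · (conj(λ₁)/λ₂)₄ = 1. -/

import Mathlib

open Zsqrtd
open scoped Classical
set_option maxHeartbeats 1000000
set_option synthInstance.maxHeartbeats 400000

/-- The imaginary unit in the Gaussian integers. -/
def gi : GaussianInt := ⟨0, 1⟩

/-- The quartic residue symbol (α/λ)₄ at a Gaussian prime λ coprime to 1+i:
the unique element of {1, -1, i, -i, 0} congruent to α^((Nλ-1)/4) modulo λ. -/
noncomputable def quarticSymbol (lam α : GaussianInt) : GaussianInt :=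
  if h : ∃ u : GaussianInt, (u = 1 ∨ u = -1 ∨ u = gi ∨ u = -gi ∨ u = 0) ∧
      lam ∣ (α ^ (((Zsqrtd.norm lam - 1) / 4).toNat) - u)
  then h.choose else 0

/-- An integral basis of the Gaussian integers. -/
noncomputable def giBasis : Module.Basis (Fin 2) ℤ GaussianInt :=
  Module.Basis.ofEquivFun
    { toFun := fun x => ![x.re, x.im]
      invFun := fun f => ⟨f 0, f 1⟩
      left_inv := fun x => by simp
      right_inv := fun f => by ext i; fin_cases i <;> simp
      map_add' := fun x y => by ext i; fin_cases i <;> simp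
      map_smul' := fun n x => by ext i; fin_cases i <;> simp [Zsqrtd.re_smul, Zsqrtd.im_smul] }

noncomputable instance : Module.Free ℤ GaussianInt := Module.Free.of_basis giBasis
instance : Module.Finite ℤ GaussianInt := Module.Finite.of_basis giBasis

lemma algNorm_eq (x : GaussianInt) : Algebra.norm ℤ x = Zsqrtd.norm x := by
  rw [Algebra.norm_eq_matrix_det giBasis x, Matrix.det_fin_two]
  simp only [Algebra.leftMulMatrix_eq_repr_mul]
  simp [giBasis, Module.Basis.ofEquivFun_repr_apply, Zsqrtd.norm_def, Zsqrtd.re_mul, Zsqrtd.im_mul]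

lemma card_quot (lam : GaussianInt) :
    Nat.card (GaussianInt ⧸ Ideal.span {lam}) = (Zsqrtd.norm lam).natAbs := by
  rw [← Submodule.cardQuot_apply, ← Ideal.absNorm_apply, Ideal.absNorm_span_singleton,
    algNorm_eq]

/-- Fermat's little theorem in the Gaussian integers. -/
lemma gi_fermat {lam α : GaussianInt} (hp : Prime lam) (hnd : ¬ lam ∣ α) :
    lam ∣ α ^ ((Zsqrtd.norm lam).natAbs - 1) - 1 := by
  have hmax : (Ideal.span {lam}).IsMaximal :=
    PrincipalIdealRing.isMaximal_of_irreducible hp.irreducible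
  letI : Field (GaussianInt ⧸ Ideal.span {lam}) := Ideal.Quotient.field _
  have hfin : Finite (GaussianInt ⧸ Ideal.span {lam}) := by
    apply Nat.finite_of_card_ne_zero
    rw [card_quot]
    simpa [Int.natAbs_ne_zero, GaussianInt.norm_eq_zero] using hp.ne_zero
  letI : Fintype (GaussianInt ⧸ Ideal.span {lam}) := Fintype.ofFinite _
  have ha : Ideal.Quotient.mk (Ideal.span {lam}) α ≠ 0 := by
    rw [Ne, Ideal.Quotient.eq_zero_iff_mem, Ideal.mem_span_singleton]
    exact hnd
  have hfe := FiniteField.pow_card_sub_one_eq_one _ ha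
  have hcard : Fintype.card (GaussianInt ⧸ Ideal.span {lam}) = (Zsqrtd.norm lam).natAbs := by
    rw [← Nat.card_eq_fintype_card, card_quot]
  rw [hcard] at hfe
  rw [← Ideal.mem_span_singleton, ← Ideal.Quotient.eq_zero_iff_mem, map_sub, map_pow, map_one,
    hfe, sub_self]

lemma not_unit_one_add_gi : ¬ IsUnit (1 + gi) := by
  rw [← Zsqrtd.norm_eq_one_iff' (by norm_num : (-1:ℤ) ≤ 0)]
  decide

lemma norm_four {lam : GaussianInt} (hp : Prime lam) (hc : IsCoprime lam (1 + gi)) :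
    ∃ m : ℤ, Zsqrtd.norm lam = 4 * m + 1 := by
  have h1 : ¬ (1 + gi) ∣ lam := fun h =>
    not_unit_one_add_gi (hc.isUnit_of_dvd' h dvd_rfl)
  rcases Int.even_or_odd lam.re with ⟨a, ha⟩ | ⟨a, ha⟩ <;>
      rcases Int.even_or_odd lam.im with ⟨b, hb⟩ | ⟨b, hb⟩
  · exact absurd ⟨⟨a + b, b - a⟩, by ext <;>
      simp [gi, Zsqrtd.re_mul, Zsqrtd.im_mul, ha, hb] <;> ring⟩ h1
  · refine ⟨a * a + b * b + b, ?_⟩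
    simp [Zsqrtd.norm_def, ha, hb]; ring
  · refine ⟨a * a + a + b * b, ?_⟩
    simp [Zsqrtd.norm_def, ha, hb]; ring
  · exact absurd ⟨⟨a + b + 1, b - a⟩, by ext <;>
      simp [gi, Zsqrtd.re_mul, Zsqrtd.im_mul, ha, hb] <;> ring⟩ h1

/-- Uniqueness of the value of the quartic residue symbol. -/
lemma uniq {lam u v : GaussianInt} (hp : Prime lam) (hc : IsCoprime lam (1 + gi))
    (hu : u = 1 ∨ u = -1 ∨ u = gi ∨ u = -gi ∨ u = 0)
    (hv : v = 1 ∨ v = -1 ∨ v = gi ∨ v = -gi ∨ v = 0)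
    (hdvd : lam ∣ u - v) : u = v := by
  by_contra hne
  have hnorm : Zsqrtd.norm (u - v) ∣ 4 := by
    rcases hu with rfl | rfl | rfl | rfl | rfl <;> rcases hv with rfl | rfl | rfl | rfl | rfl <;>
      first | (exact absurd rfl hne) | decide
  have h1 : lam ∣ ((Zsqrtd.norm (u - v) : ℤ) : GaussianInt) :=
    hdvd.trans ⟨star (u - v), (Zsqrtd.norm_eq_mul_conj _)⟩
  have h2 : lam ∣ ((4 : ℤ) : GaussianInt) := h1.trans (Int.cast_dvd_cast _ _ hnorm)
  have h4 : lam ∣ (1 + gi) ^ 4 := by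
    have he : ((4 : ℤ) : GaussianInt) = -((1 + gi) ^ 4) := by decide
    rw [he] at h2
    exact (dvd_neg).mp h2
  exact hp.not_unit (hc.isUnit_of_dvd' dvd_rfl (hp.dvd_of_dvd_pow h4))

/-- Existence of the value of the quartic residue symbol. -/
lemma exists_symbol {lam α : GaussianInt} (hp : Prime lam) (hc : IsCoprime lam (1 + gi))
    (hnd : ¬ lam ∣ α) :
    ∃ u : GaussianInt, (u = 1 ∨ u = -1 ∨ u = gi ∨ u = -gi ∨ u = 0) ∧
      lam ∣ (α ^ (((Zsqrtd.norm lam - 1) / 4).toNat) - u) := by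
  obtain ⟨m, hm⟩ := norm_four hp hc
  have hnn : 0 ≤ Zsqrtd.norm lam := Zsqrtd.norm_nonneg (by norm_num) _
  set k : ℕ := ((Zsqrtd.norm lam - 1) / 4).toNat with hk
  have hmk : (k : ℤ) = m := by
    rw [hk, hm]
    have : (4 * m + 1 - 1) / 4 = m := by omega
    rw [this, Int.toNat_of_nonneg (by omega)]
  have hkn : (Zsqrtd.norm lam).natAbs - 1 = 4 * k ∧ 1 ≤ (Zsqrtd.norm lam).natAbs := by
    have h1 : ((Zsqrtd.norm lam).natAbs : ℤ) = Zsqrtd.norm lam := Int.natAbs_of_nonneg hnn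
    omega
  have hferm := gi_fermat hp hnd
  rw [hkn.1] at hferm
  -- pass to the quotient domain
  haveI hpr : (Ideal.span {lam}).IsPrime :=
    (Ideal.span_singleton_prime hp.ne_zero).mpr hp
  set f := Ideal.Quotient.mk (Ideal.span {lam}) with hf
  have key : ∀ u : GaussianInt, f (α ^ k) = f u → lam ∣ (α ^ k - u) := by
    intro u h
    rw [← Ideal.mem_span_singleton, ← Ideal.Quotient.eq_zero_iff_mem, map_sub, h, sub_self]
  have hx4 : (f α ^ k) ^ 4 = 1 := by
    have : f (α ^ (4 * k) - 1) = 0 := by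
      rw [Ideal.Quotient.eq_zero_iff_mem, Ideal.mem_span_singleton]; exact hferm
    rw [map_sub, map_pow, map_one, sub_eq_zero] at this
    rw [← pow_mul, mul_comm]
    exact this
  have hj : (f gi) ^ 2 = -1 := by
    rw [← map_pow, (by decide : gi ^ 2 = (-1 : GaussianInt)), map_neg, map_one]
  have hfac : (f α ^ k - 1) * (f α ^ k + 1) * (f α ^ k - f gi) * (f α ^ k + f gi) = 0 := by
    linear_combination hx4 + (1 - (f α ^ k) ^ 2) * hj
  rcases mul_eq_zero.mp hfac with h | h
  · rcases mul_eq_zero.mp h with h | h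
    · rcases mul_eq_zero.mp h with h | h
      · exact ⟨1, Or.inl rfl, key 1 (by rw [map_pow, map_one, ← sub_eq_zero]; exact h)⟩
      · exact ⟨-1, Or.inr (Or.inl rfl), key (-1) (by
          rw [map_pow, map_neg, map_one, ← sub_eq_zero, sub_neg_eq_add]; exact h)⟩
    · exact ⟨gi, Or.inr (Or.inr (Or.inl rfl)), key gi (by rw [map_pow, ← sub_eq_zero]; exact h)⟩
  · exact ⟨-gi, Or.inr (Or.inr (Or.inr (Or.inl rfl))), key (-gi) (by
      rw [map_pow, map_neg, ← sub_eq_zero, sub_neg_eq_add]; exact h)⟩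

/-- For Gaussian primes λ₁, λ₂ coprime to 1+i, with λ₁ coprime to the conjugate of λ₂,
we have (λ₁ / conj λ₂)₄ · (conj λ₁ / λ₂)₄ = 1. -/
theorem stmt2 (lam₁ lam₂ : GaussianInt)
    (h₁ : Prime lam₁) (h₂ : Prime lam₂)
    (hc₁ : IsCoprime lam₁ (1 + gi)) (hc₂ : IsCoprime lam₂ (1 + gi))
    (hcross₁ : IsCoprime lam₁ (star lam₂)) (hcross₂ : IsCoprime (star lam₁) lam₂) :
    quarticSymbol (star lam₂) lam₁ * quarticSymbol lam₂ (star lam₁) = 1 := by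
  have hp₂' : Prime (star lam₂) :=
    (MulEquiv.prime_iff (starRingAut : RingAut GaussianInt).toMulEquiv (p := lam₂)).mpr h₂
  -- star lam₂ is coprime to 1 + gi
  have hc₂' : IsCoprime (star lam₂) (1 + gi) := by
    have h := hc₂.map (starRingEnd GaussianInt)
    have hst : (starRingEnd GaussianInt) (1 + gi) = 1 - gi := by decide
    rw [hst] at h
    exact h.of_isCoprime_of_dvd_right ⟨-gi, by decide⟩
  have hnd₁ : ¬ star lam₂ ∣ lam₁ := fun h =>
    hp₂'.not_unit (hcross₁.isUnit_of_dvd' h dvd_rfl)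
  have hnd₂ : ¬ lam₂ ∣ star lam₁ := fun h =>
    h₂.not_unit (hcross₂.isUnit_of_dvd' h dvd_rfl)
  have hex₁ := exists_symbol hp₂' hc₂' hnd₁
  have hex₂ := exists_symbol h₂ hc₂ hnd₂
  rw [quarticSymbol, quarticSymbol, dif_pos hex₁, dif_pos hex₂]
  obtain ⟨hu₁mem, hu₁dvd⟩ := hex₁.choose_spec
  obtain ⟨hu₂mem, hu₂dvd⟩ := hex₂.choose_spec
  set u₁ := hex₁.choose with hu₁
  set u₂ := hex₂.choose with hu₂
  clear_value u₁ u₂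
  rw [Zsqrtd.norm_conj] at hu₁dvd
  -- apply star to the first congruence
  have hstar₁ : lam₂ ∣ ((star lam₁) ^ ((Zsqrtd.norm lam₂ - 1) / 4).toNat - star u₁) := by
    have h := map_dvd (starRingEnd GaussianInt) hu₁dvd
    rw [map_sub, map_pow] at h
    simp only [starRingEnd_apply, star_star] at h
    exact h
  have hdiff : lam₂ ∣ (star u₁ - u₂) := by
    have h := dvd_sub hu₂dvd hstar₁
    have he : ((star lam₁) ^ ((Zsqrtd.norm lam₂ - 1) / 4).toNat - u₂) -
        ((star lam₁) ^ ((Zsqrtd.norm lam₂ - 1) / 4).toNat - star u₁) = star u₁ - u₂ := by ring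
    rwa [he] at h
  have hu₁star : star u₁ = 1 ∨ star u₁ = -1 ∨ star u₁ = gi ∨ star u₁ = -gi ∨ star u₁ = 0 := by
    rcases hu₁mem with rfl | rfl | rfl | rfl | rfl <;> decide
  have heq : star u₁ = u₂ := uniq h₂ hc₂ hu₁star hu₂mem hdiff
  have hu₁ne : u₁ ≠ 0 := by
    rintro rfl
    rw [sub_zero] at hu₁dvd
    exact hp₂'.not_unit
      (hcross₁.isUnit_of_dvd' (hp₂'.dvd_of_dvd_pow hu₁dvd) dvd_rfl)
  rw [← heq]
  rcases hu₁mem with rfl | rfl | rfl | rfl | rfl <;> first | decide | (exact absurd rfl hu₁ne)
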